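/- Let n be a positive integer divisible by 8, let C be a singly-even self-dual binary code of length n, and let C_max be its maximal doubly-even subcode (of dimension n/2 − 1). Then there exist exactly two doubly-even self-dual codes of length n containing C_max; moreover, every self-dual code of length n containing C_max is equal to C or to one of these two doubly-even codes, so the self-dual codes containing C_max form a set of exactly three codes which are pairwise neighbors. -/

import Mathlib

open Finset

/-- Hamming weight of a binary vector. -/
def wt {n : ℕ} (a : Fin n → ZMod 2) : ℕ :=
  (Finset.univ.filter fun i => a i ≠ 0).card

/-- Number of coordinates where both vectors are 1. -/
def mu {n : ℕ} (a b : Fin n → ZMod 2) : ℕ :=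
  (Finset.univ.filter fun i => a i = 1 ∧ b i = 1).card

/-- The dual code with respect to the standard inner product over F_2. -/
def dualCode {n : ℕ} (C : Submodule (ZMod 2) (Fin n → ZMod 2)) :
    Submodule (ZMod 2) (Fin n → ZMod 2) where
  carrier := {x | ∀ c ∈ C, ∑ i, x i * c i = 0}
  zero_mem' := by intro c hc; simp
  add_mem' := by
    intro x y hx hy c hc
    simp [add_mul, Finset.sum_add_distrib, hx c hc, hy c hc]
  smul_mem' := by
    intro r x hx c hc
    simp [mul_assoc, ← Finset.mul_sum, hx c hc]

def IsSelfDual {n : ℕ} (C : Submodule (ZMod 2) (Fin n → ZMod 2)) : Prop :=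
  C = dualCode C

def DoublyEven {n : ℕ} (C : Submodule (ZMod 2) (Fin n → ZMod 2)) : Prop :=
  ∀ c ∈ C, 4 ∣ wt c

def SinglyEven {n : ℕ} (C : Submodule (ZMod 2) (Fin n → ZMod 2)) : Prop :=
  ∃ c ∈ C, ¬ 4 ∣ wt c

/-- Minimum distance: smallest nonzero weight of a codeword. -/
noncomputable def minDist {n : ℕ} (C : Submodule (ZMod 2) (Fin n → ZMod 2)) : ℕ :=
  sInf {d | ∃ c ∈ C, c ≠ 0 ∧ wt c = d}

namespace NbrAux

variable {n : ℕ}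

def ip (x y : (Fin n → ZMod 2)) : ZMod 2 := ∑ i, x i * y i

lemma mem_dualCode {A : Submodule (ZMod 2) ((Fin n → ZMod 2))} {x : (Fin n → ZMod 2)} :
    x ∈ dualCode A ↔ ∀ c ∈ A, ip x c = 0 := Iff.rfl

lemma zmod2_cases (a : ZMod 2) : a = 0 ∨ a = 1 := by revert a; decide

lemma ne_zero_iff {a : ZMod 2} : a ≠ 0 ↔ a = 1 := by revert a; decide

lemma vadd_self (x : (Fin n → ZMod 2)) : x + x = 0 := by
  funext i
  have : ∀ a : ZMod 2, a + a = 0 := by decide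
  exact this (x i)

lemma add_add_cancel (x v : (Fin n → ZMod 2)) : x + v + v = x := by
  rw [add_assoc, vadd_self, add_zero]

lemma ip_comm (x y : (Fin n → ZMod 2)) : ip x y = ip y x :=
  Finset.sum_congr rfl fun i _ => mul_comm _ _

lemma ip_add_right (x y z : (Fin n → ZMod 2)) : ip x (y + z) = ip x y + ip x z := by
  simp [ip, mul_add, Finset.sum_add_distrib]

lemma ip_add_left (x y z : (Fin n → ZMod 2)) : ip (x + y) z = ip x z + ip y z := by
  simp [ip, add_mul, Finset.sum_add_distrib]

lemma wt_eq_card_one (x : (Fin n → ZMod 2)) : wt x = ((univ : Finset (Fin n)).filter fun i => x i = 1).card := by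
  unfold wt
  congr 1
  apply Finset.filter_congr
  intro i _
  simp [ne_zero_iff]

lemma mu_self (x : (Fin n → ZMod 2)) : mu x x = wt x := by
  rw [wt_eq_card_one]
  unfold mu
  congr 1
  apply Finset.filter_congr
  intro i _
  simp

lemma ip_eq_mu (x y : (Fin n → ZMod 2)) : ip x y = (mu x y : ZMod 2) := by
  have h : ∀ i, x i * y i = if (x i = 1 ∧ y i = 1) then (1 : ZMod 2) else 0 := by
    intro i
    rcases zmod2_cases (x i) with h1 | h1 <;> rcases zmod2_cases (y i) with h2 | h2 <;>
      simp [h1, h2]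
  unfold ip mu
  rw [Finset.sum_congr rfl fun i _ => h i, Finset.sum_boole]

lemma wt_cast (x : (Fin n → ZMod 2)) : ((wt x : ZMod 2)) = ∑ i, x i := by
  have h : ∀ i, x i = if x i = 1 then (1 : ZMod 2) else 0 := by
    intro i; rcases zmod2_cases (x i) with h1 | h1 <;> simp [h1]
  rw [wt_eq_card_one, ← Finset.sum_boole]
  exact (Finset.sum_congr rfl fun i _ => (h i).symm)

lemma wt_add_add (x y : (Fin n → ZMod 2)) : wt (x + y) + 2 * mu x y = wt x + wt y := by
  classical
  set A := (univ : Finset (Fin n)).filter fun i => x i = 1 with hA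
  set B := (univ : Finset (Fin n)).filter fun i => y i = 1 with hB
  have hsupp : ((univ : Finset (Fin n)).filter fun i => (x + y) i = 1) = (A ∪ B) \ (A ∩ B) := by
    ext i
    simp only [hA, hB, Finset.mem_filter, Finset.mem_sdiff, Finset.mem_union, Finset.mem_inter,
      Finset.mem_univ, true_and, Pi.add_apply]
    rcases zmod2_cases (x i) with h1 | h1 <;> rcases zmod2_cases (y i) with h2 | h2 <;>
      simp [h1, h2]
  have hmu : ((univ : Finset (Fin n)).filter fun i => x i = 1 ∧ y i = 1) = A ∩ B := by
    ext i
    simp [hA, hB, Finset.mem_filter, Finset.mem_inter]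
  have h1 : ((A ∪ B) \ (A ∩ B)).card + (A ∩ B).card = (A ∪ B).card :=
    Finset.card_sdiff_add_card_eq_card (Finset.inter_subset_union)
  have h2 : (A ∪ B).card + (A ∩ B).card = A.card + B.card :=
    Finset.card_union_add_card_inter A B
  rw [wt_eq_card_one, wt_eq_card_one, wt_eq_card_one, hsupp]
  unfold mu
  rw [hmu, ← hA, ← hB]
  omega

lemma mu_even_of_ip {x z : (Fin n → ZMod 2)} (h : ip x z = 0) : 2 ∣ mu x z := by
  rw [ip_eq_mu] at h
  exact (ZMod.natCast_eq_zero_iff _ 2).1 h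

lemma wt_coset {x z : (Fin n → ZMod 2)} (hz4 : 4 ∣ wt z) (hmu : 2 ∣ mu x z) :
    (wt (x + z) : ZMod 4) = (wt x : ZMod 4) := by
  have h := congrArg (Nat.cast : ℕ → ZMod 4) (wt_add_add x z)
  push_cast at h
  have h1 : ((wt z : ℕ) : ZMod 4) = 0 := (ZMod.natCast_eq_zero_iff _ 4).2 hz4
  have h2 : ((2 * mu x z : ℕ) : ZMod 4) = 0 := by
    apply (ZMod.natCast_eq_zero_iff _ 4).2
    obtain ⟨k, hk⟩ := hmu
    exact ⟨k, by omega⟩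
  push_cast at h1 h2
  linear_combination h + h1 - h2

def Bf (n : ℕ) : LinearMap.BilinForm (ZMod 2) ((Fin n → ZMod 2)) :=
  LinearMap.mk₂ (ZMod 2) (fun x y => ip x y)
    (fun x y z => ip_add_left x y z)
    (fun a x y => by
      simp only [ip, Pi.smul_apply, smul_eq_mul, mul_assoc, ← Finset.mul_sum])
    (fun x y z => ip_add_right x y z)
    (fun a x y => by
      simp only [ip, Pi.smul_apply, smul_eq_mul]
      rw [Finset.mul_sum]
      exact Finset.sum_congr rfl fun i _ => by ring)

lemma Bf_apply (x y : (Fin n → ZMod 2)) : Bf n x y = ip x y := rfl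

lemma Bf_refl : (Bf n).IsRefl := by
  intro x y h
  rw [Bf_apply, ip_comm] at h
  exact h

lemma dualCode_eq_orthogonal (A : Submodule (ZMod 2) ((Fin n → ZMod 2))) :
    dualCode A = (Bf n).orthogonal A := by
  ext x
  rw [mem_dualCode, LinearMap.BilinForm.mem_orthogonal_iff]
  constructor
  · intro h c hc
    show Bf n c x = 0
    rw [Bf_apply, ip_comm]
    exact h c hc
  · intro h c hc
    have := h c hc
    rw [Bf_apply, ip_comm] at this
    exact this

lemma orth_top : (Bf n).orthogonal ⊤ = ⊥ := by
  rw [eq_bot_iff]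
  intro x hx
  have h : ∀ c, ip c x = 0 := fun c =>
    (LinearMap.BilinForm.mem_orthogonal_iff.1 hx) c Submodule.mem_top
  have hx0 : x = 0 := by
    funext j
    have := h (Pi.single j 1)
    simpa [ip, Pi.single_apply, ite_mul] using this
  simp [hx0]

lemma finrank_dual (A : Submodule (ZMod 2) ((Fin n → ZMod 2))) :
    Module.finrank (ZMod 2) A + Module.finrank (ZMod 2) (dualCode A) = n := by
  have h := LinearMap.BilinForm.finrank_add_finrank_orthogonal (B := Bf n) Bf_refl A
  rw [orth_top, inf_bot_eq, finrank_bot, add_zero] at h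
  rw [dualCode_eq_orthogonal, h, Module.finrank_pi, Fintype.card_fin]

lemma dual_antitone {A B : Submodule (ZMod 2) ((Fin n → ZMod 2))} (h : A ≤ B) :
    dualCode B ≤ dualCode A := fun _ hx c hc => hx c (h hc)

lemma mem_sup_span {A : Submodule (ZMod 2) ((Fin n → ZMod 2))} {v x : (Fin n → ZMod 2)} :
    x ∈ A ⊔ Submodule.span (ZMod 2) {v} ↔ (x ∈ A ∨ x + v ∈ A) := by
  constructor
  · intro hx
    rcases Submodule.mem_sup.1 hx with ⟨a, ha, b, hb, rfl⟩
    rcases Submodule.mem_span_singleton.1 hb with ⟨t, rfl⟩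
    rcases zmod2_cases t with h1 | h1
    · left; simpa [h1] using ha
    · right; rw [h1, one_smul, add_add_cancel]; exact ha
  · rintro (h1 | h1)
    · exact Submodule.mem_sup_left h1
    · have hx : x = (x + v) + v := (add_add_cancel x v).symm
      rw [hx]
      exact Submodule.add_mem _ (Submodule.mem_sup_left h1)
        (Submodule.mem_sup_right (Submodule.mem_span_singleton_self v))

noncomputable def mF (A : Submodule (ZMod 2) ((Fin n → ZMod 2))) : Finset ((Fin n → ZMod 2)) :=
  @Finset.filter _ (· ∈ A) (Classical.decPred _) Finset.univ

lemma mem_mF {A : Submodule (ZMod 2) ((Fin n → ZMod 2))} {x : (Fin n → ZMod 2)} : x ∈ mF A ↔ x ∈ A := by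
  simp [mF]

lemma sum_sup_span {A : Submodule (ZMod 2) ((Fin n → ZMod 2))} {v : (Fin n → ZMod 2)} (hv : v ∉ A) (f : ((Fin n → ZMod 2) → ℂ)) :
    ∑ x ∈ mF (A ⊔ Submodule.span (ZMod 2) {v}), f x
      = ∑ x ∈ mF A, f x + ∑ x ∈ mF A, f (x + v) := by
  classical
  have h1 : mF (A ⊔ Submodule.span (ZMod 2) {v}) = mF A ∪ (mF A).image (fun z => z + v) := by
    ext x
    simp only [mem_mF, Finset.mem_union, Finset.mem_image, mem_sup_span]
    constructor
    · rintro (h | h)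
      · exact Or.inl h
      · exact Or.inr ⟨x + v, h, add_add_cancel x v⟩
    · rintro (h | ⟨z, hz, rfl⟩)
      · exact Or.inl h
      · exact Or.inr (by rw [add_add_cancel]; exact hz)
  have hdisj : Disjoint (mF A) ((mF A).image (fun z => z + v)) := by
    rw [Finset.disjoint_left]
    rintro x hx hx'
    obtain ⟨z, hz, rfl⟩ := Finset.mem_image.1 hx'
    apply hv
    have : v = (z + v) + z := by
      have := vadd_self z
      linear_combination (norm := ring_nf) -this
    rw [this]
    exact Submodule.add_mem _ (mem_mF.1 hx) (mem_mF.1 hz)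
  rw [h1, Finset.sum_union hdisj, Finset.sum_image (fun a _ b _ h => by
    have := congrArg (fun t => t + v) h
    simpa [add_add_cancel] using this)]

open Complex in
lemma I_pow_four' : (Complex.I) ^ 4 = 1 := by
  have := Complex.I_sq
  calc Complex.I ^ 4 = (Complex.I ^ 2) ^ 2 := by ring
  _ = 1 := by rw [this]; ring

lemma I_pow_mod (a : ℕ) : Complex.I ^ a = Complex.I ^ (a % 4) := by
  conv_lhs => rw [← Nat.div_add_mod a 4]
  rw [pow_add, pow_mul, I_pow_four', one_pow, one_mul]

lemma I_pow_of_four_dvd {a : ℕ} (h : 4 ∣ a) : Complex.I ^ a = 1 := by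
  obtain ⟨k, rfl⟩ := h
  rw [pow_mul, I_pow_four', one_pow]

lemma neg_I_pow_of_four_dvd {a : ℕ} (h : 4 ∣ a) : (-Complex.I) ^ a = 1 := by
  obtain ⟨k, rfl⟩ := h
  rw [pow_mul]
  have : (-Complex.I) ^ 4 = 1 := by
    have := Complex.I_sq
    calc (-Complex.I) ^ 4 = (Complex.I ^ 2) ^ 2 := by ring
    _ = 1 := by rw [this]; ring
  rw [this, one_pow]

lemma one_sub_I : (1 : ℂ) - Complex.I = (1 + Complex.I) * (-Complex.I) := by
  linear_combination Complex.I_sq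

lemma neg_one_pow_nat (m : ℕ) : ((-1 : ℂ)) ^ m = if (m : ZMod 2) = 0 then 1 else -1 := by
  rcases Nat.even_or_odd m with h | h
  · rw [if_pos, Even.neg_one_pow h]
    rw [ZMod.natCast_eq_zero_iff]
    exact h.two_dvd
  · rw [if_neg, Odd.neg_one_pow h]
    rw [ZMod.natCast_eq_zero_iff]
    intro hc
    obtain ⟨k, rfl⟩ := h
    omega

lemma prod_ite_pow (p : Fin n → Prop) [DecidablePred p] (c d : ℂ) :
    (∏ i, if p i then c else d)
      = c ^ ((univ : Finset (Fin n)).filter p).card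
        * d ^ (n - ((univ : Finset (Fin n)).filter p).card) := by
  classical
  rw [Finset.prod_ite, Finset.prod_const, Finset.prod_const]
  congr 2
  have := Finset.card_filter_add_card_filter_not (s := (univ : Finset (Fin n))) p
  rw [Finset.card_univ, Fintype.card_fin] at this
  omega

lemma sum_zmod2 (f : ZMod 2 → ℂ) : ∑ a : ZMod 2, f a = f 0 + f 1 := by
  have huniv : (univ : Finset (ZMod 2)) = {0, 1} := by decide
  rw [huniv, Finset.sum_insert (by decide), Finset.sum_singleton]

lemma char_sum (w : (Fin n → ZMod 2)) :
    ∑ x : (Fin n → ZMod 2), (Complex.I ^ wt x * (-1 : ℂ) ^ mu x w)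
      = (1 + Complex.I) ^ (n - wt w) * (1 - Complex.I) ^ wt w := by
  classical
  have hterm : ∀ x : (Fin n → ZMod 2), Complex.I ^ wt x * (-1 : ℂ) ^ mu x w
      = ∏ i, ((if x i = 1 then Complex.I else 1) * (if x i = 1 ∧ w i = 1 then (-1 : ℂ) else 1)) := by
    intro x
    rw [Finset.prod_mul_distrib, prod_ite_pow, prod_ite_pow, one_pow, one_pow, mul_one, mul_one,
      wt_eq_card_one]
    rfl
  rw [Finset.sum_congr rfl fun x _ => hterm x]
  rw [show (univ : Finset ((Fin n → ZMod 2))) = Fintype.piFinset (fun _ : Fin n => (univ : Finset (ZMod 2)))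
      from (Fintype.piFinset_univ).symm]
  rw [← Finset.prod_univ_sum (fun _ : Fin n => (univ : Finset (ZMod 2)))
    (fun i a => (if a = 1 then Complex.I else 1) * (if a = 1 ∧ w i = 1 then (-1 : ℂ) else 1))]
  have hsum : ∀ i : Fin n, (∑ a : ZMod 2,
      ((if a = 1 then Complex.I else 1) * (if a = 1 ∧ w i = 1 then (-1 : ℂ) else 1)))
      = if w i = 1 then 1 - Complex.I else 1 + Complex.I := by
    intro i
    rw [sum_zmod2]
    rcases zmod2_cases (w i) with h | h <;> simp [h] <;> ring
  rw [Finset.prod_congr rfl fun i _ => hsum i, prod_ite_pow, ← wt_eq_card_one, mul_comm]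

lemma orth_sum_mem {A : Submodule (ZMod 2) ((Fin n → ZMod 2))} {x : (Fin n → ZMod 2)} (hx : x ∈ dualCode A) :
    ∑ c ∈ mF A, ((-1 : ℂ)) ^ mu x c = ((mF A).card : ℂ) := by
  rw [Finset.sum_congr rfl fun c hc => ?_, Finset.sum_const, nsmul_eq_mul, mul_one]
  have h2 : 2 ∣ mu x c := mu_even_of_ip (mem_dualCode.1 hx c (mem_mF.1 hc))
  obtain ⟨k, hk⟩ := h2
  exact Even.neg_one_pow ⟨k, by omega⟩

lemma orth_sum_notmem {A : Submodule (ZMod 2) ((Fin n → ZMod 2))} {x : (Fin n → ZMod 2)} (hx : x ∉ dualCode A) :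
    ∑ c ∈ mF A, ((-1 : ℂ)) ^ mu x c = 0 := by
  classical
  rw [mem_dualCode] at hx
  push_neg at hx
  obtain ⟨c0, hc0A, hc0⟩ := hx
  have hflip : ∀ c, ((-1 : ℂ)) ^ mu x (c + c0) = -((-1 : ℂ)) ^ mu x c := by
    intro c
    have hparity : ((mu x (c + c0) : ZMod 2)) = (mu x c : ZMod 2) + 1 := by
      rw [← ip_eq_mu, ← ip_eq_mu, ip_add_right]
      congr 1
      rcases zmod2_cases (ip x c0) with h | h
      · exact absurd h hc0
      · exact h
    rw [neg_one_pow_nat, neg_one_pow_nat, hparity]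
    rcases zmod2_cases ((mu x c : ZMod 2)) with h | h
    · rw [h, if_neg (show ¬((0 : ZMod 2) + 1 = 0) by decide), if_pos rfl]
    · rw [h, if_pos (show ((1 : ZMod 2) + 1 = 0) by decide),
        if_neg (show ¬((1 : ZMod 2) = 0) by decide)]; ring
  -- to finish: S = -S
  have hmap : ∀ c ∈ mF A, c + c0 ∈ mF A := by
    intro c hc
    exact mem_mF.2 (Submodule.add_mem _ (mem_mF.1 hc) hc0A)
  have hS : ∑ c ∈ mF A, ((-1 : ℂ)) ^ mu x c = ∑ c ∈ mF A, ((-1 : ℂ)) ^ mu x (c + c0) := by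
    apply Finset.sum_nbij' (fun c => c + c0) (fun c => c + c0) <;>
      intro c hc <;> simp [hmap c hc, add_add_cancel]
  rw [Finset.sum_congr rfl fun c _ => hflip c, Finset.sum_neg_distrib] at hS
  have h2 : (2 : ℂ) * ∑ c ∈ mF A, ((-1 : ℂ)) ^ mu x c = 0 := by linear_combination hS
  have := mul_eq_zero.1 h2
  simpa using this

lemma wt_le (x : (Fin n → ZMod 2)) : wt x ≤ n := by
  unfold wt
  calc _ ≤ (univ : Finset (Fin n)).card := Finset.card_filter_le _ _
  _ = n := by rw [Finset.card_univ, Fintype.card_fin]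

lemma pow_calc {w : ℕ} (hw : w ≤ n) (h4 : 4 ∣ w) :
    (1 + Complex.I) ^ (n - w) * (1 - Complex.I) ^ w = (1 + Complex.I) ^ n := by
  rw [one_sub_I, mul_pow, ← mul_assoc, ← pow_add, Nat.sub_add_cancel hw,
    neg_I_pow_of_four_dvd h4, mul_one]

lemma master {C0 : Submodule (ZMod 2) ((Fin n → ZMod 2))} (hC0 : ∀ c ∈ C0, 4 ∣ wt c) :
    ∑ x ∈ mF (dualCode C0), Complex.I ^ wt x = (1 + Complex.I) ^ n := by
  classical
  have hL : ∑ c ∈ mF C0, ∑ x : (Fin n → ZMod 2), (Complex.I ^ wt x * (-1 : ℂ) ^ mu x c)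
      = ((mF C0).card : ℂ) * (1 + Complex.I) ^ n := by
    rw [Finset.sum_congr rfl fun c hc => ?_, Finset.sum_const, nsmul_eq_mul]
    rw [char_sum c, pow_calc (wt_le c) (hC0 c (mem_mF.1 hc))]
  have hR : ∑ c ∈ mF C0, ∑ x : (Fin n → ZMod 2), (Complex.I ^ wt x * (-1 : ℂ) ^ mu x c)
      = ((mF C0).card : ℂ) * ∑ x ∈ mF (dualCode C0), Complex.I ^ wt x := by
    letI : DecidablePred (· ∈ dualCode C0) := Classical.decPred _
    rw [Finset.sum_comm]
    have hsplit := Finset.sum_filter_add_sum_filter_not (univ : Finset ((Fin n → ZMod 2)))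
      (· ∈ dualCode C0) (fun x => ∑ c ∈ mF C0, (Complex.I ^ wt x * (-1 : ℂ) ^ mu x c))
    rw [← hsplit]
    have h1 : ∑ x ∈ Finset.univ.filter (· ∈ dualCode C0),
        (∑ c ∈ mF C0, (Complex.I ^ wt x * (-1 : ℂ) ^ mu x c))
        = ∑ x ∈ mF (dualCode C0), (((mF C0).card : ℂ) * Complex.I ^ wt x) := by
      apply Finset.sum_congr rfl
      intro x hx
      rw [← Finset.mul_sum, orth_sum_mem (by simpa using hx)]
      ring
    have h2 : ∑ x ∈ Finset.univ.filter (¬ · ∈ dualCode C0),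
        (∑ c ∈ mF C0, (Complex.I ^ wt x * (-1 : ℂ) ^ mu x c)) = 0 := by
      apply Finset.sum_eq_zero
      intro x hx
      rw [← Finset.mul_sum, orth_sum_notmem (by simpa using hx), mul_zero]
    rw [h1, h2, add_zero, ← Finset.mul_sum]
  have hcard : ((mF C0).card : ℂ) ≠ 0 := by
    have : (0 : (Fin n → ZMod 2)) ∈ mF C0 := mem_mF.2 (Submodule.zero_mem _)
    have hpos : 0 < (mF C0).card := Finset.card_pos.2 ⟨0, this⟩
    exact_mod_cast Nat.pos_iff_ne_zero.1 hpos
  exact mul_left_cancel₀ hcard (by rw [← hR, hL])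

lemma finrank_sup_span {A : Submodule (ZMod 2) ((Fin n → ZMod 2))} {v : (Fin n → ZMod 2)} (hv : v ∉ A) :
    Module.finrank (ZMod 2) ↥(A ⊔ Submodule.span (ZMod 2) {v})
      = Module.finrank (ZMod 2) A + 1 := by
  have hv0 : v ≠ 0 := fun h => hv (h ▸ A.zero_mem)
  have hinf : A ⊓ Submodule.span (ZMod 2) {v} = ⊥ := by
    rw [eq_bot_iff]
    intro x hx
    obtain ⟨hxA, hxs⟩ := Submodule.mem_inf.1 hx
    rcases Submodule.mem_span_singleton.1 hxs with ⟨t, rfl⟩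
    rcases zmod2_cases t with h | h
    · simp [h]
    · rw [h, one_smul] at hxA; exact absurd hxA hv
  have h := Submodule.finrank_sup_add_finrank_inf_eq A (Submodule.span (ZMod 2) {v})
  rw [hinf, finrank_bot, add_zero, finrank_span_singleton hv0] at h
  exact h

lemma sup_span_congr {A : Submodule (ZMod 2) ((Fin n → ZMod 2))} {u w : (Fin n → ZMod 2)} (h : u + w ∈ A) :
    A ⊔ Submodule.span (ZMod 2) {u} = A ⊔ Submodule.span (ZMod 2) {w} := by
  apply le_antisymm
  · apply sup_le le_sup_left
    rw [Submodule.span_le, Set.singleton_subset_iff]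
    exact mem_sup_span.2 (Or.inr h)
  · apply sup_le le_sup_left
    rw [Submodule.span_le, Set.singleton_subset_iff]
    exact mem_sup_span.2 (Or.inr (by rwa [add_comm] at h))

lemma sup_span_le_dual {A : Submodule (ZMod 2) ((Fin n → ZMod 2))} {v : (Fin n → ZMod 2)}
    (h1 : A ≤ dualCode A) (h2 : v ∈ dualCode A) (h3 : ip v v = 0) :
    A ⊔ Submodule.span (ZMod 2) {v} ≤ dualCode (A ⊔ Submodule.span (ZMod 2) {v}) := by
  intro x hx
  rw [mem_dualCode]
  intro c hc
  have hAA : ∀ z ∈ A, ∀ w ∈ A, ip z w = 0 := fun z hz w hw => mem_dualCode.1 (h1 hz) w hw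
  have hvA : ∀ z ∈ A, ip v z = 0 := fun z hz => mem_dualCode.1 h2 z hz
  rcases mem_sup_span.1 hx with hx1 | hx1 <;> rcases mem_sup_span.1 hc with hc1 | hc1
  · exact hAA x hx1 c hc1
  · obtain ⟨w, hw, rfl⟩ : ∃ w, w ∈ A ∧ c = w + v := ⟨c + v, hc1, (add_add_cancel c v).symm⟩
    rw [ip_add_right, hAA x hx1 w hw, ip_comm x v, hvA x hx1, add_zero]
  · obtain ⟨z, hz, rfl⟩ : ∃ z, z ∈ A ∧ x = z + v := ⟨x + v, hx1, (add_add_cancel x v).symm⟩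
    rw [ip_add_left, hAA z hz c hc1, hvA c hc1, add_zero]
  · obtain ⟨z, hz, rfl⟩ : ∃ z, z ∈ A ∧ x = z + v := ⟨x + v, hx1, (add_add_cancel x v).symm⟩
    obtain ⟨w, hw, rfl⟩ : ∃ w, w ∈ A ∧ c = w + v := ⟨c + v, hc1, (add_add_cancel c v).symm⟩
    rw [ip_add_left, ip_add_right, ip_add_right, hAA z hz w hw, h3, hvA w hw,
      ip_comm z v, hvA z hz]
    simp

end NbrAux

open NbrAux

theorem neighborhood_of_typeI {n : ℕ} (hn : 0 < n) (h8 : 8 ∣ n)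
    (C Cmax : Submodule (ZMod 2) (Fin n → ZMod 2))
    (hsd : IsSelfDual C) (hse : SinglyEven C)
    (hmax : (Cmax : Set (Fin n → ZMod 2)) = {c | c ∈ C ∧ 4 ∣ wt c})
    (hdim : Module.finrank (ZMod 2) Cmax = n / 2 - 1) :
    ∃ C2 C3 : Submodule (ZMod 2) (Fin n → ZMod 2),
      C2 ≠ C3 ∧
      IsSelfDual C2 ∧ DoublyEven C2 ∧ Cmax ≤ C2 ∧
      IsSelfDual C3 ∧ DoublyEven C3 ∧ Cmax ≤ C3 ∧
      (∀ D : Submodule (ZMod 2) (Fin n → ZMod 2),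
        IsSelfDual D → DoublyEven D → Cmax ≤ D → D = C2 ∨ D = C3) ∧
      (∀ D : Submodule (ZMod 2) (Fin n → ZMod 2),
        IsSelfDual D → Cmax ≤ D → D = C ∨ D = C2 ∨ D = C3) ∧
      Module.finrank (ZMod 2) ↥(C ⊓ C2) = n / 2 - 1 ∧
      Module.finrank (ZMod 2) ↥(C ⊓ C3) = n / 2 - 1 ∧
      Module.finrank (ZMod 2) ↥(C2 ⊓ C3) = n / 2 - 1 := by
  classical
  obtain ⟨k, hk⟩ := h8
  have hmem : ∀ x : Fin n → ZMod 2, x ∈ Cmax ↔ x ∈ C ∧ 4 ∣ wt x := by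
    intro x
    have := Set.ext_iff.1 hmax x
    simpa using this
  have hCmaxC : Cmax ≤ C := fun x hx => ((hmem x).1 hx).1
  have hCd : C = dualCode C := hsd
  have hCeven : ∀ c ∈ C, 2 ∣ wt c := by
    intro c hc
    have h0 : ip c c = 0 := (mem_dualCode.1 (hCd ▸ hc)) c hc
    rw [ip_eq_mu, mu_self] at h0
    exact (ZMod.natCast_eq_zero_iff _ 2).1 h0
  have frC' := finrank_dual C
  rw [← hCd] at frC'
  have frC : Module.finrank (ZMod 2) C = n / 2 := by omega
  set P := dualCode Cmax with hP
  have frP : Module.finrank (ZMod 2) P = n / 2 + 1 := by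
    have h := finrank_dual Cmax
    rw [hdim, ← hP] at h
    omega
  have hCP : C ≤ P := fun x hx => dual_antitone hCmaxC (hCd ▸ hx)
  obtain ⟨c1, hc1C, hc1w⟩ := hse
  have hc1Cmax : c1 ∉ Cmax := fun h => hc1w ((hmem c1).1 h).2
  have hc1even : 2 ∣ wt c1 := hCeven c1 hc1C
  have hc1mod : wt c1 % 4 = 2 := by omega
  have hPnleC : ¬ P ≤ C := by
    intro h
    have := Submodule.finrank_mono h
    omega
  obtain ⟨y, hyP, hyC⟩ := SetLike.not_le_iff_exists.1 hPnleC
  have hyCmax : y ∉ Cmax := fun h => hyC (hCmaxC h)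
  -- all-ones vector
  have honeC : (fun _ => 1 : Fin n → ZMod 2) ∈ C := by
    rw [hCd, mem_dualCode]
    intro c hc
    have he : ip (fun _ => 1) c = ((wt c : ZMod 2)) := by
      rw [wt_cast]
      exact Finset.sum_congr rfl fun i _ => one_mul _
    rw [he, ZMod.natCast_eq_zero_iff]
    exact hCeven c hc
  have hwtone : wt (fun _ => 1 : Fin n → ZMod 2) = n := by
    unfold wt
    rw [Finset.filter_true_of_mem fun i _ => one_ne_zero, Finset.card_univ, Fintype.card_fin]
  have honeCmax : (fun _ => 1 : Fin n → ZMod 2) ∈ Cmax :=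
    (hmem _).2 ⟨honeC, by rw [hwtone]; omega⟩
  have hPeven : ∀ x ∈ P, 2 ∣ wt x := by
    intro x hx
    have h0 : ip x (fun _ => 1) = 0 := mem_dualCode.1 hx _ honeCmax
    have he : ip x (fun _ => 1) = ((wt x : ZMod 2)) := by
      rw [wt_cast]
      exact Finset.sum_congr rfl fun i _ => mul_one _
    rw [he, ZMod.natCast_eq_zero_iff] at h0
    exact h0
  have hcoset : ∀ r ∈ P, ∀ z ∈ Cmax, wt (z + r) % 4 = wt r % 4 := by
    intro r hr z hz
    have h4z : 4 ∣ wt z := ((hmem z).1 hz).2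
    have hmu2 : 2 ∣ mu r z := mu_even_of_ip (mem_dualCode.1 hr z hz)
    have hc := wt_coset (x := r) (z := z) h4z hmu2
    rw [add_comm z r]
    exact (ZMod.natCast_eq_natCast_iff' _ _ _).1 hc
  have hIcoset : ∀ r ∈ P, ∀ z ∈ Cmax, Complex.I ^ wt (z + r) = Complex.I ^ wt r := by
    intro r hr z hz
    rw [I_pow_mod, hcoset r hr z hz, ← I_pow_mod]
  have hCmaxP : Cmax ≤ P := le_trans hCmaxC hCP
  set D2 := Cmax ⊔ Submodule.span (ZMod 2) {y} with hD2
  have frD2 : Module.finrank (ZMod 2) D2 = n / 2 := by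
    rw [hD2, finrank_sup_span hyCmax, hdim]; omega
  have hc1D2 : c1 ∉ D2 := by
    rw [hD2]
    intro h
    rcases mem_sup_span.1 h with h1 | h1
    · exact hc1Cmax h1
    · apply hyC
      have hy : y = (c1 + y) + c1 := by
        have hcc := vadd_self c1
        linear_combination -hcc
      rw [hy]
      exact Submodule.add_mem _ (hCmaxC h1) hc1C
  have hEP : D2 ⊔ Submodule.span (ZMod 2) {c1} = P := by
    apply Submodule.eq_of_le_of_finrank_le
    · apply sup_le
      · rw [hD2]
        apply sup_le hCmaxP
        rw [Submodule.span_le, Set.singleton_subset_iff]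
        exact hyP
      · rw [Submodule.span_le, Set.singleton_subset_iff]
        exact hCP hc1C
    · rw [frP, finrank_sup_span hc1D2, frD2]
  have hc1P : c1 ∈ P := hCP hc1C
  have hy'P : y + c1 ∈ P := Submodule.add_mem _ hyP hc1P
  -- the character sum computation
  have hmaster : ∑ x ∈ mF P, Complex.I ^ wt x = (1 + Complex.I) ^ n :=
    master fun c hc => ((hmem c).1 hc).2
  have h8I : (1 + Complex.I) ^ 8 = 16 := by
    have h2 : (1 + Complex.I) ^ 2 = 2 * Complex.I := by linear_combination Complex.I_sq
    calc (1 + Complex.I) ^ 8 = ((1 + Complex.I) ^ 2) ^ 4 := by ring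
    _ = (2 * Complex.I) ^ 4 := by rw [h2]
    _ = 16 * Complex.I ^ 4 := by ring
    _ = 16 := by rw [I_pow_four']; ring
  have haux : (1 + Complex.I) ^ n = (16 : ℂ) ^ k := by rw [hk, pow_mul, h8I]
  have e1 : ∑ x ∈ mF P, Complex.I ^ wt x
      = ∑ x ∈ mF D2, Complex.I ^ wt x + ∑ x ∈ mF D2, Complex.I ^ wt (x + c1) := by
    rw [← hEP]
    exact sum_sup_span hc1D2 _
  have e2 : ∑ x ∈ mF D2, Complex.I ^ wt x
      = ∑ z ∈ mF Cmax, Complex.I ^ wt z + ∑ z ∈ mF Cmax, Complex.I ^ wt (z + y) :=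
    sum_sup_span hyCmax _
  have e3 : ∑ x ∈ mF D2, Complex.I ^ wt (x + c1)
      = ∑ z ∈ mF Cmax, Complex.I ^ wt (z + c1)
        + ∑ z ∈ mF Cmax, Complex.I ^ wt ((z + y) + c1) :=
    sum_sup_span hyCmax _
  have s1 : ∑ z ∈ mF Cmax, Complex.I ^ wt z = (((mF Cmax).card : ℂ)) := by
    rw [Finset.sum_congr rfl fun z hz => I_pow_of_four_dvd ((hmem z).1 (mem_mF.1 hz)).2,
      Finset.sum_const, nsmul_eq_mul, mul_one]
  have s2 : ∑ z ∈ mF Cmax, Complex.I ^ wt (z + y)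
      = ((mF Cmax).card : ℂ) * Complex.I ^ wt y := by
    rw [Finset.sum_congr rfl fun z hz => hIcoset y hyP z (mem_mF.1 hz),
      Finset.sum_const, nsmul_eq_mul]
  have s3 : ∑ z ∈ mF Cmax, Complex.I ^ wt (z + c1)
      = ((mF Cmax).card : ℂ) * Complex.I ^ wt c1 := by
    rw [Finset.sum_congr rfl fun z hz => hIcoset c1 hc1P z (mem_mF.1 hz),
      Finset.sum_const, nsmul_eq_mul]
  have s4 : ∑ z ∈ mF Cmax, Complex.I ^ wt ((z + y) + c1)
      = ((mF Cmax).card : ℂ) * Complex.I ^ wt (y + c1) := by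
    rw [Finset.sum_congr rfl fun z hz => ?_, Finset.sum_const, nsmul_eq_mul]
    rw [add_assoc]
    exact hIcoset (y + c1) hy'P z (mem_mF.1 hz)
  have hIc1 : Complex.I ^ wt c1 = -1 := by rw [I_pow_mod, hc1mod]; exact Complex.I_sq
  have heq2 : ((mF Cmax).card : ℂ) * (Complex.I ^ wt y + Complex.I ^ wt (y + c1))
      = (16 : ℂ) ^ k := by
    rw [← haux, ← hmaster, e1, e2, e3, s1, s2, s3, s4, hIc1]
    ring
  have h2a : 2 ∣ wt y := hPeven y hyP
  have h2b : 2 ∣ wt (y + c1) := hPeven _ hy'P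
  have h4ab : 4 ∣ wt y ∧ 4 ∣ wt (y + c1) := by
    have ha : wt y % 4 = 0 ∨ wt y % 4 = 2 := by omega
    have hb : wt (y + c1) % 4 = 0 ∨ wt (y + c1) % 4 = 2 := by omega
    have h16 : (16 : ℂ) ≠ 0 := by norm_num
    rcases ha with ha | ha <;> rcases hb with hb | hb
    · exact ⟨by omega, by omega⟩
    · exfalso
      rw [I_pow_mod (wt y), ha, pow_zero, I_pow_mod (wt (y + c1)), hb, Complex.I_sq] at heq2
      have hz : (16 : ℂ) ^ k = 0 := by linear_combination -heq2
      exact pow_ne_zero k h16 hz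
    · exfalso
      rw [I_pow_mod (wt y), ha, Complex.I_sq, I_pow_mod (wt (y + c1)), hb, pow_zero] at heq2
      have hz : (16 : ℂ) ^ k = 0 := by linear_combination -heq2
      exact pow_ne_zero k h16 hz
    · exfalso
      rw [I_pow_mod (wt y), ha, Complex.I_sq, I_pow_mod (wt (y + c1)), hb, Complex.I_sq] at heq2
      have hnat : ((16 ^ k + 2 * (mF Cmax).card : ℕ) : ℂ) = 0 := by
        push_cast
        linear_combination -heq2
      have h0 := Nat.cast_eq_zero.1 hnat
      have hpos : 0 < 16 ^ k := pow_pos (by norm_num) k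
      omega
  obtain ⟨h4a, h4b⟩ := h4ab
  -- define the two codes
  set C3 := Cmax ⊔ Submodule.span (ZMod 2) {y + c1} with hC3
  have hy'C : y + c1 ∉ C := fun h => hyC (by
    have : y = (y + c1) + c1 := by
      have hcc := vadd_self c1
      linear_combination -hcc
    rw [this]
    exact Submodule.add_mem _ h hc1C)
  have hy'Cmax : y + c1 ∉ Cmax := fun h => hy'C (hCmaxC h)
  have frC3 : Module.finrank (ZMod 2) C3 = n / 2 := by
    rw [hC3, finrank_sup_span hy'Cmax, hdim]; omega
  -- self-duality of D2 and C3
  have hCmaxdd : Cmax ≤ dualCode Cmax := fun z hz => dual_antitone hCmaxC (hCd ▸ hCmaxC hz)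
  have hipself : ∀ v : Fin n → ZMod 2, 2 ∣ wt v → ip v v = 0 := by
    intro v hv
    rw [ip_eq_mu, mu_self, ZMod.natCast_eq_zero_iff]
    exact hv
  have hsdD2 : IsSelfDual D2 := by
    have hle : D2 ≤ dualCode D2 := sup_span_le_dual hCmaxdd hyP (hipself y h2a)
    have hfr := finrank_dual D2
    exact Submodule.eq_of_le_of_finrank_le hle (by omega)
  have hsdC3 : IsSelfDual C3 := by
    have hle : C3 ≤ dualCode C3 := sup_span_le_dual hCmaxdd hy'P (hipself _ h2b)
    have hfr := finrank_dual C3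
    exact Submodule.eq_of_le_of_finrank_le hle (by omega)
  -- doubly even
  have hdeD2 : DoublyEven D2 := by
    intro x hx
    rcases mem_sup_span.1 hx with h1 | h1
    · exact ((hmem x).1 h1).2
    · obtain ⟨z, hz, rfl⟩ : ∃ z, z ∈ Cmax ∧ x = z + y := ⟨x + y, h1, (add_add_cancel x y).symm⟩
      have := hcoset y hyP z hz
      omega
  have hdeC3 : DoublyEven C3 := by
    intro x hx
    rcases mem_sup_span.1 hx with h1 | h1
    · exact ((hmem x).1 h1).2
    · obtain ⟨z, hz, rfl⟩ : ∃ z, z ∈ Cmax ∧ x = z + (y + c1) :=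
        ⟨x + (y + c1), h1, (add_add_cancel x (y + c1)).symm⟩
      have := hcoset (y + c1) hy'P z hz
      omega
  -- D2 ≠ C3
  have hne : D2 ≠ C3 := by
    intro h
    have hyD2 : y ∈ D2 := Submodule.mem_sup_right (Submodule.mem_span_singleton_self y)
    have hy'D2 : y + c1 ∈ D2 := by
      rw [h, hC3]
      exact Submodule.mem_sup_right (Submodule.mem_span_singleton_self _)
    have hc1mem : c1 ∈ D2 := by
      have : c1 = y + (y + c1) := by
        have hcc := vadd_self y
        linear_combination -hcc
      rw [this]
      exact Submodule.add_mem _ hyD2 hy'D2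
    rcases mem_sup_span.1 hc1mem with h1 | h1
    · exact hc1Cmax h1
    · apply hyC
      have : y = (c1 + y) + c1 := by
        have hcc := vadd_self c1
        linear_combination -hcc
      rw [this]
      exact Submodule.add_mem _ (hCmaxC h1) hc1C
  -- C as a sup
  have hCeq : C = Cmax ⊔ Submodule.span (ZMod 2) {c1} := by
    symm
    apply Submodule.eq_of_le_of_finrank_le
    · apply sup_le hCmaxC
      rw [Submodule.span_le, Set.singleton_subset_iff]
      exact hc1C
    · rw [frC, finrank_sup_span hc1Cmax, hdim]; omega
  -- trichotomy
  have tri : ∀ D : Submodule (ZMod 2) (Fin n → ZMod 2),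
      IsSelfDual D → Cmax ≤ D → D = C ∨ D = D2 ∨ D = C3 := by
    intro D hD hCmD
    have frD' := finrank_dual D
    rw [← hD] at frD'
    have frD : Module.finrank (ZMod 2) D = n / 2 := by omega
    have hDP : D ≤ P := fun x hx => dual_antitone hCmD (hD ▸ hx)
    have hDne : ¬ D ≤ Cmax := by
      intro h
      have := Submodule.finrank_mono h
      omega
    obtain ⟨d, hdD, hdCm⟩ := SetLike.not_le_iff_exists.1 hDne
    have hDd : D = Cmax ⊔ Submodule.span (ZMod 2) {d} := by
      symm
      apply Submodule.eq_of_le_of_finrank_le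
      · apply sup_le hCmD
        rw [Submodule.span_le, Set.singleton_subset_iff]
        exact hdD
      · rw [frD, finrank_sup_span hdCm, hdim]; omega
    have hdE : d ∈ D2 ⊔ Submodule.span (ZMod 2) {c1} := by rw [hEP]; exact hDP hdD
    rcases mem_sup_span.1 hdE with h1 | h1
    · rcases mem_sup_span.1 h1 with h2 | h2
      · exact absurd h2 hdCm
      · right; left
        rw [hDd, sup_span_congr h2, hD2]
    · rcases mem_sup_span.1 h1 with h2 | h2
      · left
        rw [hDd, sup_span_congr h2, hCeq]
      · right; right
        have h3 : d + (y + c1) ∈ Cmax := by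
          have : d + (y + c1) = d + c1 + y := by ring
          rw [this]
          exact h2
        rw [hDd, sup_span_congr h3, hC3]
  have tri2 : ∀ D : Submodule (ZMod 2) (Fin n → ZMod 2),
      IsSelfDual D → DoublyEven D → Cmax ≤ D → D = D2 ∨ D = C3 := by
    intro D hD hDe hCmD
    rcases tri D hD hCmD with h | h | h
    · exfalso
      apply hc1w
      exact hDe c1 (h ▸ hc1C)
    · exact Or.inl h
    · exact Or.inr h
  -- intersections
  have hinf1 : C ⊓ D2 = Cmax := by
    apply le_antisymm
    · intro x hx
      obtain ⟨hxC, hxD2⟩ := Submodule.mem_inf.1 hx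
      rcases mem_sup_span.1 hxD2 with h1 | h1
      · exact h1
      · exfalso
        apply hyC
        have : y = (x + y) + x := by
          have hcc := vadd_self x
          linear_combination -hcc
        rw [this]
        exact Submodule.add_mem _ (hCmaxC h1) hxC
    · exact le_inf hCmaxC le_sup_left
  have hinf2 : C ⊓ C3 = Cmax := by
    apply le_antisymm
    · intro x hx
      obtain ⟨hxC, hxC3⟩ := Submodule.mem_inf.1 hx
      rcases mem_sup_span.1 hxC3 with h1 | h1
      · exact h1
      · exfalso
        apply hy'C
        have : y + c1 = (x + (y + c1)) + x := by
          have hcc := vadd_self x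
          linear_combination -hcc
        rw [this]
        exact Submodule.add_mem _ (hCmaxC h1) hxC
    · exact le_inf hCmaxC le_sup_left
  have hinf3 : D2 ⊓ C3 = Cmax := by
    apply le_antisymm
    · intro x hx
      obtain ⟨hxD2, hxC3⟩ := Submodule.mem_inf.1 hx
      rcases mem_sup_span.1 hxD2 with h1 | h1
      · exact h1
      rcases mem_sup_span.1 hxC3 with h2 | h2
      · exact h2
      exfalso
      apply hc1Cmax
      have : c1 = (x + y) + (x + (y + c1)) := by
        have hcx := vadd_self x
        have hcy := vadd_self y
        linear_combination -hcx - hcy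
      rw [this]
      exact Submodule.add_mem _ h1 h2
    · exact le_inf le_sup_left le_sup_left
  refine ⟨D2, C3, hne, hsdD2, hdeD2, le_sup_left, hsdC3, hdeC3, le_sup_left, tri2, tri, ?_, ?_, ?_⟩
  · rw [hinf1]; exact hdim
  · rw [hinf2]; exact hdim
  · rw [hinf3]; exact hdim
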